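/- arXiv:1312.6573 — 11 statements merged into one kernel-verified Lean document; each statement's English description precedes it below -/
import Mathlib

section
/- Let n ≥ 1, let λ ≥ 1 be a real number, and let p, q, q_a : ℝ → EuclideanSpace ℝ (Fin n). Assume q is 1-Lipschitz; for every t ≥ 0, p t ≠ q_a t and ‖q_a t − q t‖ ≤ ‖p t − q t‖ / λ; and p is differentiable with deriv p t = (q_a t − p t) / ‖q_a t − p t‖ for every t ≥ 0 (the GreedyTracking strategy). Then for all t ≥ 0, ‖p t − q t‖ ≤ ‖p 0 − q 0‖ + t / λ². -/
open Filter Set Topology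

set_option maxHeartbeats 1000000

/-- Key geometric inequality: the unit vector toward the observed location has
inner product at most `-(1 - 1/λ²)‖v‖` with the tracker-minus-target vector. -/
lemma greedy_key {E : Type*} [NormedAddCommGroup E] [InnerProductSpace ℝ E]
    {lam : ℝ} (hlam : 1 ≤ lam) {v e : E}
    (he : ‖e‖ ≤ ‖v‖ / lam) (hev : e - v ≠ 0) :
    (inner ℝ ((‖e - v‖)⁻¹ • (e - v)) v : ℝ) ≤ -(1 - 1 / lam ^ 2) * ‖v‖ := by
  have hlam0 : (0 : ℝ) < lam := lt_of_lt_of_le one_pos hlam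
  set d := ‖v‖ with hd_def
  set a := ‖e‖ with ha_def
  set c : ℝ := inner ℝ e v with hc_def
  set w := ‖e - v‖ with hw_def
  have hw : 0 < w := norm_pos_iff.mpr hev
  have hd0 : 0 ≤ d := norm_nonneg v
  have ha : 0 ≤ a := norm_nonneg e
  have hal : a * lam ≤ d := by
    have := (le_div_iff₀ hlam0).mp he
    linarith
  have hc : |c| ≤ a * d := abs_real_inner_le_norm e v
  have hc1 := (abs_le.mp hc).1
  have hc2 := (abs_le.mp hc).2
  have hw2 : w ^ 2 = a ^ 2 - 2 * c + d ^ 2 := by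
    rw [hw_def, norm_sub_sq_real, ← hc_def, ← ha_def, ← hd_def]
  have h1 : 0 ≤ d ^ 2 - c := by nlinarith [hlam0, hlam]
  have ha2 : lam ^ 2 * a ^ 2 ≤ d ^ 2 := by
    nlinarith [mul_le_mul hal hal (by positivity : (0:ℝ) ≤ a * lam) hd0]
  -- squared inequality
  have hkey0 : lam ^ 4 * a ^ 2 ≤ lam ^ 2 * d ^ 2 := by nlinarith [ha2, sq_nonneg lam]
  have hterm : 0 ≤ (2 * lam ^ 2 - 1) * d ^ 2 - lam ^ 4 * a ^ 2 := by
    nlinarith [hkey0, mul_nonneg (sq_nonneg d) (by nlinarith : (0:ℝ) ≤ lam ^ 2 - 1)]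
  have hsq' : lam ^ 4 * (lam ^ 2 - 1) ^ 2 * d ^ 2 * (a ^ 2 - 2 * c + d ^ 2)
      ≤ (lam ^ 4 * (d ^ 2 - c)) ^ 2 := by
    nlinarith [sq_nonneg (lam ^ 4 * c - (2 * lam ^ 2 - 1) * d ^ 2),
      mul_nonneg (mul_nonneg (sq_nonneg (lam ^ 2 - 1)) (sq_nonneg d)) hterm]
  have hsq : (lam ^ 2 * (lam ^ 2 - 1) * d * w) ^ 2 ≤ (lam ^ 4 * (d ^ 2 - c)) ^ 2 := by
    calc (lam ^ 2 * (lam ^ 2 - 1) * d * w) ^ 2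
        = lam ^ 4 * (lam ^ 2 - 1) ^ 2 * d ^ 2 * w ^ 2 := by ring
      _ = lam ^ 4 * (lam ^ 2 - 1) ^ 2 * d ^ 2 * (a ^ 2 - 2 * c + d ^ 2) := by rw [hw2]
      _ ≤ _ := hsq'
  have hLnn : 0 ≤ lam ^ 2 * (lam ^ 2 - 1) * d * w := by
    have : 0 ≤ lam ^ 2 - 1 := by nlinarith
    positivity
  have hynn : 0 ≤ lam ^ 4 * (d ^ 2 - c) := by positivity
  have h2 : lam ^ 2 * (lam ^ 2 - 1) * d * w ≤ lam ^ 4 * (d ^ 2 - c) := by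
    have := Real.sqrt_le_sqrt hsq
    rwa [Real.sqrt_sq hLnn, Real.sqrt_sq hynn] at this
  have key2 : (lam ^ 2 - 1) * d * w ≤ lam ^ 2 * (d ^ 2 - c) := by
    have hpos : (0 : ℝ) < lam ^ 2 := by positivity
    have h2' : lam ^ 2 * ((lam ^ 2 - 1) * d * w) ≤ lam ^ 2 * (lam ^ 2 * (d ^ 2 - c)) := by
      linear_combination h2
    exact (mul_le_mul_iff_right₀ hpos).mp h2'
  have hinner : (inner ℝ ((‖e - v‖)⁻¹ • (e - v)) v : ℝ) = w⁻¹ * (c - d ^ 2) := by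
    rw [real_inner_smul_left, inner_sub_left, ← hc_def, real_inner_self_eq_norm_sq, ← hd_def,
      ← hw_def]
  rw [hinner, inv_mul_eq_div, div_le_iff₀ hw]
  have hpos : (0 : ℝ) < lam ^ 2 := by positivity
  rw [show -(1 - 1 / lam ^ 2) * d * w = -((lam ^ 2 - 1) * d * w) / lam ^ 2 by
    field_simp]
  rw [le_div_iff₀ hpos]
  nlinarith [key2]

/-- **Greedy tracking upper bound.** If the target `q` moves with unit speed, the
observed location `q_a` satisfies the relative error bound
`‖q_a t - q t‖ ≤ ‖p t - q t‖ / λ`, and the tracker `p` moves at unit speed directly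
toward the observed location (GreedyTracking), then the tracker–target distance
satisfies `‖p t - q t‖ ≤ ‖p 0 - q 0‖ + t / λ²` for all `t ≥ 0`. -/
theorem greedy_tracking_upper_bound
    (n : ℕ) (hn : 1 ≤ n) (lam : ℝ) (hlam : 1 ≤ lam)
    (p q qa : ℝ → EuclideanSpace ℝ (Fin n))
    (hq : LipschitzWith 1 q)
    (hne : ∀ t ≥ (0 : ℝ), p t ≠ qa t)
    (herr : ∀ t ≥ (0 : ℝ), ‖qa t - q t‖ ≤ ‖p t - q t‖ / lam)
    (hdiff : Differentiable ℝ p)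
    (hderiv : ∀ t ≥ (0 : ℝ), deriv p t = (‖qa t - p t‖)⁻¹ • (qa t - p t)) :
    ∀ t ≥ (0 : ℝ), ‖p t - q t‖ ≤ ‖p 0 - q 0‖ + t / lam ^ 2 := by
  intro T hT
  have hlam0 : (0 : ℝ) < lam := lt_of_lt_of_le one_pos hlam
  set μ : ℝ := 1 / lam ^ 2 with hμdef
  have hμpos : 0 < μ := by positivity
  set g : ℝ → ℝ := fun t => ‖p t - q t‖ with hg
  have hgc : Continuous g := (hdiff.continuous.sub hq.continuous).norm
  -- the tracker never reaches the target for t ≥ 0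
  have hpq : ∀ s, 0 ≤ s → p s ≠ q s := by
    intro s hs h
    apply hne s hs
    have h1 := herr s hs
    rw [h, sub_self, norm_zero, zero_div] at h1
    have : qa s = q s := by
      rwa [← sub_eq_zero, ← norm_le_zero_iff]
    rw [h, this]
  -- Dini-type slope bound
  have key : ∀ s ∈ Ico (0 : ℝ) T, ∀ r, μ < r → ∃ᶠ z in 𝓝[>] s, slope g s z < r := by
    intro s hs' r hr
    have hs : (0 : ℝ) ≤ s := hs'.1
    apply Filter.Eventually.frequently
    set ε : ℝ := (r - μ) / 3 with hεdef
    have hε : 0 < ε := by simp only [hεdef]; linarith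
    set d : ℝ := ‖p s - q s‖ with hddef
    have hd : 0 < d := norm_pos_iff.mpr (sub_ne_zero.mpr (hpq s hs))
    set u := deriv p s with hu
    have hune : qa s - p s ≠ 0 := sub_ne_zero.mpr (Ne.symm (hne s hs))
    have hu1 : ‖u‖ = 1 := by rw [hu, hderiv s hs]; exact norm_smul_inv_norm hune
    have hinner : (inner ℝ u (p s - q s) : ℝ) ≤ -(1 - μ) * d := by
      rw [hu, hderiv s hs]
      have hev : (qa s - q s) - (p s - q s) = qa s - p s := by abel
      have := greedy_key (E := EuclideanSpace ℝ (Fin n)) hlam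
        (v := p s - q s) (e := qa s - q s) (herr s hs) (by rw [hev]; exact hune)
      rw [hev] at this
      exact this
    -- little-o estimate from differentiability
    have hlo := (hasDerivAt_iff_isLittleO.mp (hdiff s).hasDerivAt).def hε
    have hIoo : Ioo s (s + 2 * d * ε) ∈ 𝓝[>] s :=
      Ioo_mem_nhdsGT (by nlinarith)
    filter_upwards [hIoo, hlo.filter_mono nhdsWithin_le_nhds] with z hz hz2
    set h : ℝ := z - s with hhdef
    have hh0 : 0 < h := sub_pos.mpr hz.1
    have hh1 : h < 2 * d * ε := by simp only [hhdef]; linarith [hz.2]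
    -- bound g z - g s
    have ht1 : g z ≤ ‖p z - q s‖ + h := by
      have : ‖p z - q z‖ ≤ ‖p z - q s‖ + ‖q s - q z‖ := by
        calc ‖p z - q z‖ = ‖(p z - q s) + (q s - q z)‖ := by abel_nf
          _ ≤ _ := norm_add_le _ _
      have hqd : ‖q s - q z‖ ≤ h := by
        have := hq.dist_le_mul s z
        rw [dist_eq_norm] at this
        rw [Real.dist_eq] at this
        simp only [NNReal.coe_one, one_mul] at this
        calc ‖q s - q z‖ = dist (q s) (q z) := (dist_eq_norm _ _).symm
          _ ≤ |s - z| := this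
          _ = h := by rw [abs_sub_comm, abs_of_pos hh0]
      linarith [this, hqd]
    have ht2 : ‖p z - q s‖ ≤ ‖(p s - q s) + h • u‖ + ε * h := by
      have htri : ‖p z - q s‖ ≤ ‖(p s - q s) + h • u‖ + ‖p z - p s - h • u‖ := by
        calc ‖p z - q s‖ = ‖((p s - q s) + h • u) + (p z - p s - h • u)‖ := by abel_nf
          _ ≤ _ := norm_add_le _ _
      have hsm : ‖p z - p s - (z - s) • u‖ ≤ ε * ‖z - s‖ := hz2
      rw [← hhdef] at hsm
      rw [show ‖h‖ = h from abs_of_pos hh0] at hsm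
      linarith [htri, hsm]
    set A : ℝ := ‖(p s - q s) + h • u‖ with hAdef
    have hA2 : A ^ 2 ≤ d ^ 2 - 2 * (1 - μ) * d * h + h ^ 2 := by
      have := norm_add_sq_real (p s - q s) (h • u)
      rw [← hAdef, ← hddef] at this
      rw [real_inner_smul_right, norm_smul, hu1, Real.norm_eq_abs, abs_of_pos hh0] at this
      have hvu : (inner ℝ (p s - q s) u : ℝ) ≤ -(1 - μ) * d := by
        rw [real_inner_comm]; exact hinner
      nlinarith [this, hvu, hh0]
    have hA : 2 * d * A ≤ 2 * d * d - 2 * (1 - μ) * d * h + h ^ 2 := by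
      nlinarith [sq_nonneg (A - d), hA2]
    -- finish: slope < r
    have hgz : g z - g s ≤ A - d + (1 + ε) * h := by
      have : g s = d := rfl
      rw [this]
      have := ht1.trans (by linarith [ht2] : ‖p z - q s‖ + h ≤ A + ε * h + h)
      linarith
    have hfin : g z - g s < r * h := by
      have h2dA : 2 * d * (g z - g s) ≤ 2 * d * (A - d) + 2 * d * (1 + ε) * h := by
        nlinarith [hgz, hd]
      have : 2 * d * (A - d) ≤ -2 * (1 - μ) * d * h + h ^ 2 := by nlinarith [hA]
      have hh2 : h ^ 2 < 2 * d * ε * h := by nlinarith [hh1, hh0]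
      have : 2 * d * (g z - g s) < 2 * d * (r * h) := by
        have hre : r = μ + 3 * ε := by simp only [hεdef]; ring
        nlinarith [h2dA, this, hh2, hd, hh0]
      exact lt_of_mul_lt_mul_left this (by positivity)
    have hzs : (0 : ℝ) < z - s := sub_pos.mpr hz.1
    rw [hhdef] at hfin
    rw [slope_def_field, div_lt_iff₀ hzs]
    exact hfin
  -- apply the fencing theorem
  have hB : ∀ x ∈ Ico (0 : ℝ) T, HasDerivWithinAt (fun x => g 0 + μ * x) μ (Ici x) x := by
    intro x _
    simpa using (((hasDerivWithinAt_id x (Ici x)).const_mul μ).const_add (g 0))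
  have := image_le_of_liminf_slope_right_le_deriv_boundary (f := g) (a := 0) (b := T)
    hgc.continuousOn (B := fun x => g 0 + μ * x) (B' := fun _ => μ)
    (by simp) ((continuous_const.add (continuous_const.mul continuous_id)).continuousOn)
    hB key
  have hT' := this ⟨hT, le_refl T⟩
  have : μ * T = T / lam ^ 2 := by rw [hμdef]; ring
  simp only [hg] at hT'
  linarith [hT']
end

section
/- For all real numbers d > 0, Δ ≥ 0 and any angle γ ∈ ℝ: √((Δ·sin γ)² + (d + Δ − Δ·cos γ)²) ≤ d + Δ·(1 + Δ/d)·(1 − cos γ). -/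
/-- **Per-step distance bound for the greedy tracker.** If the current distance is `d`,
the tracker moves distance `Δ` toward the observed location and the target moves
distance `Δ` directly away, with `γ` the angle at the tracker between the true and
observed target locations, then the new distance satisfies
`√((Δ sin γ)² + (d + Δ − Δ cos γ)²) ≤ d + Δ(1 + Δ/d)(1 − cos γ)`. -/
theorem greedy_step_distance_bound
    (d Δ γ : ℝ) (hd : 0 < d) (hΔ : 0 ≤ Δ) :
    Real.sqrt ((Δ * Real.sin γ) ^ 2 + (d + Δ - Δ * Real.cos γ) ^ 2)
      ≤ d + Δ * (1 + Δ / d) * (1 - Real.cos γ) := by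
  have hc := Real.cos_le_one γ
  have hc2 := Real.neg_one_le_cos γ
  have hpyth := Real.sin_sq_add_cos_sq γ
  set q := Δ / d with hqdef
  have hqn : 0 ≤ q := div_nonneg hΔ hd.le
  have hΔeq : Δ = q * d := by rw [hqdef, div_mul_cancel₀ Δ hd.ne']
  have hR : 0 ≤ d + Δ * (1 + q) * (1 - Real.cos γ) := by
    have h1 : 0 ≤ Δ * (1 + q) * (1 - Real.cos γ) :=
      mul_nonneg (mul_nonneg hΔ (by linarith)) (by linarith)
    linarith
  have key : (Δ * Real.sin γ) ^ 2 + (d + Δ - Δ * Real.cos γ) ^ 2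
      ≤ (d + Δ * (1 + q) * (1 - Real.cos γ)) ^ 2 := by
    rw [hΔeq]
    have expand : (q * d * Real.sin γ) ^ 2 + (d + q * d - q * d * Real.cos γ) ^ 2
        = (d + q * d * (1 + q) * (1 - Real.cos γ)) ^ 2
          - (q * d * (1 - Real.cos γ) * (1 + q)) ^ 2 := by
      linear_combination (q * d) ^ 2 * hpyth
    rw [expand]
    linarith [sq_nonneg (q * d * (1 - Real.cos γ) * (1 + q))]
  calc Real.sqrt ((Δ * Real.sin γ) ^ 2 + (d + Δ - Δ * Real.cos γ) ^ 2)
      ≤ Real.sqrt ((d + Δ * (1 + q) * (1 - Real.cos γ)) ^ 2) := Real.sqrt_le_sqrt key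
    _ = d + Δ * (1 + q) * (1 - Real.cos γ) := Real.sqrt_sq hR
end

section
/- Let E be a real inner product space and let p, q, q' ∈ E with q ≠ p and q' ≠ p. Then Real.sin (InnerProductGeometry.angle (q − p) (q' − p)) ≤ ‖q − q'‖ / ‖q − p‖. -/
/-- In a real inner product space, the sine of the angle at `p` between the
directions toward `q` and toward `q'` is at most `‖q − q'‖ / ‖q − p‖`. -/
theorem sin_angle_le_dist_div_dist
    {E : Type*} [NormedAddCommGroup E] [InnerProductSpace ℝ E]
    (p q q' : E) (hq : q ≠ p) (hq' : q' ≠ p) :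
    Real.sin (InnerProductGeometry.angle (q - p) (q' - p)) ≤ ‖q - q'‖ / ‖q - p‖ := by
  set u := q - p with hu
  set v := q' - p with hv
  have ha : (0:ℝ) < ‖u‖ := norm_pos_iff.2 (sub_ne_zero.2 hq)
  have hb : (0:ℝ) < ‖v‖ := norm_pos_iff.2 (sub_ne_zero.2 hq')
  have huv : q - q' = u - v := by simp [hu, hv]
  rw [huv]
  have key := InnerProductGeometry.sin_angle_mul_norm_mul_norm u v
  have hinner : inner ℝ u v = Real.cos (InnerProductGeometry.angle u v) * (‖u‖ * ‖v‖) :=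
    (InnerProductGeometry.cos_angle_mul_norm_mul_norm u v).symm
  have hnormsub : ‖u - v‖ ^ 2 = ‖u‖ ^ 2 - 2 * inner ℝ u v + ‖v‖ ^ 2 := by
    rw [@norm_sub_sq_real]
  have hsq : Real.sqrt ((inner ℝ u u : ℝ) * inner ℝ v v - inner ℝ u v * inner ℝ u v)
      ≤ ‖u - v‖ * ‖v‖ := by
    rw [show ‖u - v‖ * ‖v‖ = Real.sqrt ((‖u - v‖ * ‖v‖) ^ 2) from
      (Real.sqrt_sq (by positivity)).symm]
    apply Real.sqrt_le_sqrt
    rw [real_inner_self_eq_norm_sq, real_inner_self_eq_norm_sq]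
    nlinarith [hnormsub, sq_nonneg (‖v‖ ^ 2 - (inner ℝ u v : ℝ))]
  have : Real.sin (InnerProductGeometry.angle u v) * (‖u‖ * ‖v‖) ≤ (‖u - v‖ / ‖u‖) * (‖u‖ * ‖v‖) := by
    rw [key]
    calc Real.sqrt _ ≤ ‖u - v‖ * ‖v‖ := hsq
      _ = (‖u - v‖ / ‖u‖) * (‖u‖ * ‖v‖) := by field_simp
  exact le_of_mul_le_mul_right this (by positivity)
end

section
/- For all real numbers d > 0, λ ≥ 1, and 0 < α ≤ 1: √((√(4d² − α²d²/λ²) − d)² + α²d²/λ²) ≥ d·√(1 + α²/(2λ²)). -/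
/-- **Phase distance growth (equal speeds).** The distance between the target's
destination and the best possible tracker position after the tracker moves distance
`2d` along the central axis is at least `d·√(1 + α²/(2λ²))`. -/
theorem phase_distance_growth
    (d lam α : ℝ) (hd : 0 < d) (hlam : 1 ≤ lam) (hα0 : 0 < α) (hα1 : α ≤ 1) :
    d * Real.sqrt (1 + α ^ 2 / (2 * lam ^ 2)) ≤
      Real.sqrt ((Real.sqrt (4 * d ^ 2 - α ^ 2 * d ^ 2 / lam ^ 2) - d) ^ 2
        + α ^ 2 * d ^ 2 / lam ^ 2) := by
  have hlam0 : (0:ℝ) < lam := lt_of_lt_of_le one_pos hlam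
  have hlam2' : (0:ℝ) < lam ^ 2 := by positivity
  have hlam2 : (1:ℝ) ≤ lam ^ 2 := by nlinarith
  have hα2 : α ^ 2 ≤ 1 := by nlinarith
  -- abbreviate t = α²/λ²
  have e1 : α ^ 2 * d ^ 2 / lam ^ 2 = (α ^ 2 / lam ^ 2) * d ^ 2 := by ring
  have e2 : α ^ 2 / (2 * lam ^ 2) = (α ^ 2 / lam ^ 2) / 2 := by ring
  rw [e1, e2]
  have ht0 : 0 < α ^ 2 / lam ^ 2 := by positivity
  have ht1 : α ^ 2 / lam ^ 2 ≤ 1 := by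
    rw [div_le_one hlam2']; linarith
  generalize α ^ 2 / lam ^ 2 = t at ht0 ht1 ⊢
  have hX : (0:ℝ) ≤ 4 * d ^ 2 - t * d ^ 2 := by nlinarith [sq_nonneg d]
  set s := Real.sqrt (4 * d ^ 2 - t * d ^ 2) with hs
  have hs0 : 0 ≤ s := Real.sqrt_nonneg _
  have hs2 : s ^ 2 = 4 * d ^ 2 - t * d ^ 2 := Real.sq_sqrt hX
  rw [show d * Real.sqrt (1 + t / 2) = Real.sqrt (d ^ 2 * (1 + t / 2)) by
    rw [Real.sqrt_mul (sq_nonneg d), Real.sqrt_sq hd.le]]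
  apply Real.sqrt_le_sqrt
  have hkey : 2 * d * s ≤ (4 - t / 2) * d ^ 2 := by
    nlinarith [sq_nonneg (s - (2 - t / 4) * d), sq_nonneg (t * d), mul_pos hd hd,
      mul_nonneg (mul_nonneg ht0.le hd.le) hs0, sq_nonneg d]
  nlinarith [hkey, hs2]
end

section
/- Let d > 0, λ ≥ 1, and 0 < α ≤ 1 be real numbers. In the plane ℝ², let p = (0,0), h = √(4d² − α²d²/λ²), q_a = (d + h, α·d/λ), and q_b = (d + h, −α·d/λ). Then for every point p' ∈ ℝ² with ‖p' − p‖ ≤ 2d, one has max (‖p' − q_a‖) (‖p' − q_b‖) ≥ d·√(1 + α²/(2λ²)). -/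
lemma phase_key (d b h x y M : ℝ) (hd : 0 < d) (hb : 0 < b) (hbd : b ≤ d)
    (hh0 : 0 ≤ h) (hh2 : h ^ 2 = 4 * d ^ 2 - b ^ 2)
    (hxy : x ^ 2 + y ^ 2 ≤ 4 * d ^ 2) (hM0 : 0 ≤ M)
    (hMA : (x - (d + h)) ^ 2 + (y - b) ^ 2 ≤ M ^ 2)
    (hMB : (x - (d + h)) ^ 2 + (y + b) ^ 2 ≤ M ^ 2) :
    d ^ 2 + b ^ 2 / 2 ≤ M ^ 2 := by
  have hx2d : x ≤ 2 * d := by nlinarith [sq_nonneg y, sq_nonneg (x - 2 * d), sq_nonneg (x + 2 * d)]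
  have hhd : d ≤ h := by nlinarith
  have hstep : (h - d) ^ 2 ≤ (x - (d + h)) ^ 2 := by nlinarith
  have h4 : 0 ≤ 4 * d ^ 2 - b ^ 2 / 2 + 2 * d * h := by nlinarith
  have hlast : d ^ 2 - b ^ 2 / 2 ≤ (h - d) ^ 2 := by
    nlinarith [sq_nonneg (b ^ 2), h4]
  nlinarith

set_option maxHeartbeats 1000000 in
/-- **Phase lower bound in the plane.** With the tracker at the origin, target tips
`q_a = (d + h, αd/λ)` and `q_b = (d + h, −αd/λ)` where `h = √(4d² − α²d²/λ²)`,
any tracker position `p'` with `‖p' − p‖ ≤ 2d` is at distance at least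
`d·√(1 + α²/(2λ²))` from one of `q_a`, `q_b`. -/
theorem phase_lower_bound_plane
    (d lam α : ℝ) (hd : 0 < d) (hlam : 1 ≤ lam) (hα0 : 0 < α) (hα1 : α ≤ 1)
    (h : ℝ) (hh : h = Real.sqrt (4 * d ^ 2 - α ^ 2 * d ^ 2 / lam ^ 2))
    (p qa qb : EuclideanSpace ℝ (Fin 2))
    (hp : p = (WithLp.equiv 2 (Fin 2 → ℝ)).symm ![0, 0])
    (hqa : qa = (WithLp.equiv 2 (Fin 2 → ℝ)).symm ![d + h, α * d / lam])
    (hqb : qb = (WithLp.equiv 2 (Fin 2 → ℝ)).symm ![d + h, -(α * d / lam)]) :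
    ∀ p' : EuclideanSpace ℝ (Fin 2), ‖p' - p‖ ≤ 2 * d →
      d * Real.sqrt (1 + α ^ 2 / (2 * lam ^ 2)) ≤ max ‖p' - qa‖ ‖p' - qb‖ := by
  intro p' hp'
  have hlam0 : (0:ℝ) < lam := lt_of_lt_of_le one_pos hlam
  set b : ℝ := α * d / lam with hb
  have hbpos : 0 < b := by positivity
  have hbd : b ≤ d := by
    rw [hb, div_le_iff₀ hlam0]
    nlinarith
  have hbe : α ^ 2 * d ^ 2 / lam ^ 2 = b ^ 2 := by rw [hb]; field_simp
  have hnn : 0 ≤ 4 * d ^ 2 - α ^ 2 * d ^ 2 / lam ^ 2 := by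
    rw [hbe]; nlinarith
  have hh0 : 0 ≤ h := hh ▸ Real.sqrt_nonneg _
  have hh2 : h ^ 2 = 4 * d ^ 2 - b ^ 2 := by
    rw [hh, Real.sq_sqrt hnn, hbe]
  have hnorm : ∀ v : EuclideanSpace ℝ (Fin 2), ‖v‖ ^ 2 = v 0 ^ 2 + v 1 ^ 2 := by
    intro v
    rw [EuclideanSpace.norm_eq, Real.sq_sqrt (by positivity)]
    simp [Fin.sum_univ_two, sq_abs]
  set x : ℝ := p' 0 with hx
  set y : ℝ := p' 1 with hy
  have hsub : ∀ (q : EuclideanSpace ℝ (Fin 2)) (i : Fin 2), (p' - q) i = p' i - q i := by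
    intro q i; rfl
  have hA : ‖p' - qa‖ ^ 2 = (x - (d + h)) ^ 2 + (y - b) ^ 2 := by
    rw [hnorm, hsub, hsub, hqa]; simp [hx, hy]
  have hB : ‖p' - qb‖ ^ 2 = (x - (d + h)) ^ 2 + (y + b) ^ 2 := by
    rw [hnorm, hsub, hsub, hqb]; simp [hx, hy]
  have hxy : x ^ 2 + y ^ 2 ≤ 4 * d ^ 2 := by
    have h1 : ‖p' - p‖ ^ 2 = x ^ 2 + y ^ 2 := by
      rw [hnorm, hsub, hsub, hp]; simp [hx, hy]
    nlinarith [norm_nonneg (p' - p)]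
  set M : ℝ := max ‖p' - qa‖ ‖p' - qb‖ with hM
  have hM0 : 0 ≤ M := le_trans (norm_nonneg _) (le_max_left _ _)
  have hMA : ‖p' - qa‖ ^ 2 ≤ M ^ 2 :=
    pow_le_pow_left₀ (norm_nonneg _) (le_max_left _ _) 2
  have hMB : ‖p' - qb‖ ^ 2 ≤ M ^ 2 :=
    pow_le_pow_left₀ (norm_nonneg _) (le_max_right _ _) 2
  rw [hA] at hMA
  rw [hB] at hMB
  have key := phase_key d b h x y M hd hbpos hbd hh0 hh2 hxy hM0 hMA hMB
  have hT : (d * Real.sqrt (1 + α ^ 2 / (2 * lam ^ 2))) ^ 2 = d ^ 2 + b ^ 2 / 2 := by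
    rw [mul_pow, Real.sq_sqrt (by positivity), hb]
    field_simp
  have hTnn : 0 ≤ d * Real.sqrt (1 + α ^ 2 / (2 * lam ^ 2)) := by positivity
  have hfin : (d * Real.sqrt (1 + α ^ 2 / (2 * lam ^ 2))) ^ 2 ≤ M ^ 2 := by
    rw [hT]; exact key
  exact (pow_le_pow_iff_left₀ hTnn hM0 two_ne_zero).mp hfin
end

section
/- Let λ ≥ 1 and 0 < α ≤ 1 be real numbers, and let d, t : ℕ → ℝ satisfy d 0 > 0, t 0 = 0, and for every i: t (i+1) = t i + 2·(d i) and d (i+1) ≥ (d i)·√(1 + α²/(2λ²)). Then for every n: d n ≥ d 0 + (α²/(16λ²))·(t n). -/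
/-- **Ω(t/λ²) lower bound via phases.** If phase `i` starts at time `t i` with
distance `d i`, lasts `2·(d i)` time units, and multiplies the distance by at
least `√(1 + α²/(2λ²))`, then `d n ≥ d 0 + (α²/(16λ²))·(t n)` for every `n`. -/
theorem phased_distance_lower_bound
    (lam α : ℝ) (hlam : 1 ≤ lam) (hα0 : 0 < α) (hα1 : α ≤ 1)
    (d t : ℕ → ℝ) (hd0 : 0 < d 0) (ht0 : t 0 = 0)
    (ht : ∀ i, t (i + 1) = t i + 2 * d i)
    (hd : ∀ i, d i * Real.sqrt (1 + α ^ 2 / (2 * lam ^ 2)) ≤ d (i + 1)) :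
    ∀ n, d 0 + α ^ 2 / (16 * lam ^ 2) * t n ≤ d n := by
  have hlam0 : (0:ℝ) < lam := lt_of_lt_of_le one_pos hlam
  set x : ℝ := α ^ 2 / (2 * lam ^ 2) with hxdef
  have hx0 : 0 < x := by positivity
  have hx8 : x ≤ 8 := by
    rw [hxdef, div_le_iff₀ (by positivity)]
    nlinarith [sq_nonneg α, sq_nonneg lam]
  have hr : 1 + x / 4 ≤ Real.sqrt (1 + x) := by
    have h1 : (0:ℝ) ≤ 1 + x / 4 := by linarith
    have h2 : (1 + x / 4) ^ 2 ≤ 1 + x := by nlinarith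
    nlinarith [Real.sq_sqrt (by linarith : (0:ℝ) ≤ 1 + x),
      Real.sqrt_nonneg (1 + x)]
  have key : ∀ n, 0 ≤ t n ∧ d 0 + α ^ 2 / (16 * lam ^ 2) * t n ≤ d n := by
    intro n
    induction n with
    | zero => simp [ht0]
    | succ n ih =>
      obtain ⟨htn, hdn⟩ := ih
      have hdnpos : 0 < d n := by
        have : 0 ≤ α ^ 2 / (16 * lam ^ 2) * t n := by positivity
        linarith
      constructor
      · rw [ht n]; linarith
      · have h1 : d n * (1 + x / 4) ≤ d (n + 1) := by
          calc d n * (1 + x / 4) ≤ d n * Real.sqrt (1 + x) := by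
                exact mul_le_mul_of_nonneg_left hr hdnpos.le
            _ ≤ d (n + 1) := hd n
        have hc : α ^ 2 / (16 * lam ^ 2) = x / 8 := by
          rw [hxdef]; ring
        rw [hc] at hdn ⊢
        rw [ht n]
        nlinarith
  exact fun n => (key n).2
end

section
/- Let n ≥ 1, let λ > 1 be a real number, and set s = √(1/(1 − 1/λ²)). Let p, q, q_a : ℝ → EuclideanSpace ℝ (Fin n). Assume q is 1-Lipschitz; for every t ≥ 0, p t ≠ q_a t and ‖q_a t − q t‖ ≤ ‖p t − q t‖ / λ; and p is differentiable with deriv p t = s·(q_a t − p t) / ‖q_a t − p t‖ for every t ≥ 0 (greedy tracking at speed s). Then for all t ≥ 0, ‖p t − q t‖ ≤ ‖p 0 − q 0‖. -/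
open Filter Set
open scoped Topology RealInnerProductSpace

/-- AM-GM based inner product lower bound for the tracking geometry. -/
lemma tracking_inner_key {E : Type*} [NormedAddCommGroup E] [InnerProductSpace ℝ E]
    (a b : E) (lam k : ℝ) (hk : 0 ≤ k) (hk2 : k ^ 2 = 1 - 1 / lam ^ 2)
    (h : ‖a - b‖ ≤ ‖b‖ / lam) : ‖a‖ * ‖b‖ * k ≤ ⟪a, b⟫ := by
  have h1 : ‖a - b‖ ^ 2 = ‖a‖ ^ 2 - 2 * ⟪a, b⟫ + ‖b‖ ^ 2 := by
    rw [@norm_sub_sq_real]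
  have hab : 0 ≤ ‖a - b‖ := norm_nonneg _
  have h2 : ‖a - b‖ ^ 2 ≤ (‖b‖ / lam) ^ 2 := by
    apply sq_le_sq' _ h; linarith
  have h3 : (‖b‖ / lam) ^ 2 = ‖b‖ ^ 2 * (1 - k ^ 2) := by
    rw [div_pow, hk2]; ring
  nlinarith [sq_nonneg (‖a‖ - k * ‖b‖), norm_nonneg a, norm_nonneg b]

/-- **Sufficient speedup for the tracker.** If the target `q` has unit speed, the
observed location satisfies the relative error bound with parameter `λ > 1`, and
the tracker moves at speed `s = √(1/(1 − 1/λ²))` directly toward the observed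
location, then the tracker–target distance never exceeds its initial value. -/
theorem speedup_tracking_upper_bound
    (n : ℕ) (hn : 1 ≤ n) (lam : ℝ) (hlam : 1 < lam)
    (s : ℝ) (hs : s = Real.sqrt (1 / (1 - 1 / lam ^ 2)))
    (p q qa : ℝ → EuclideanSpace ℝ (Fin n))
    (hq : LipschitzWith 1 q)
    (hne : ∀ t ≥ (0 : ℝ), p t ≠ qa t)
    (herr : ∀ t ≥ (0 : ℝ), ‖qa t - q t‖ ≤ ‖p t - q t‖ / lam)
    (hdiff : Differentiable ℝ p)
    (hderiv : ∀ t ≥ (0 : ℝ), deriv p t = (s / ‖qa t - p t‖) • (qa t - p t)) :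
    ∀ t ≥ (0 : ℝ), ‖p t - q t‖ ≤ ‖p 0 - q 0‖ := by
  intro T hT
  have hlam0 : (0 : ℝ) < lam := by linarith
  have hden : (0 : ℝ) < 1 - 1 / lam ^ 2 := by
    have h1 : (1 : ℝ) < lam ^ 2 := by nlinarith
    have h2 : 1 / lam ^ 2 < 1 := by
      rw [div_lt_one (by positivity)]; exact h1
    linarith
  set k : ℝ := Real.sqrt (1 - 1 / lam ^ 2) with hkdef
  have hk0 : 0 < k := Real.sqrt_pos.2 hden
  have hk2 : k ^ 2 = 1 - 1 / lam ^ 2 := Real.sq_sqrt hden.le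
  have hsk : s * k = 1 := by
    rw [hs, hkdef, ← Real.sqrt_mul (by positivity)]
    rw [one_div, inv_mul_cancel₀ hden.ne', Real.sqrt_one]
  have hs0 : 0 < s := by nlinarith
  -- distance is positive on [0, ∞)
  have hpos : ∀ x ≥ (0 : ℝ), 0 < ‖p x - q x‖ := by
    intro x hx
    rcases eq_or_ne (p x) (q x) with h | h
    · exfalso
      have h1 := herr x hx
      rw [h, sub_self, norm_zero, zero_div] at h1
      have h2 : qa x = q x := by
        have := le_antisymm h1 (norm_nonneg _)
        rwa [norm_eq_zero, sub_eq_zero] at this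
      exact hne x hx (by rw [h2, h])
    · simpa [norm_pos_iff, sub_eq_zero] using h
  set f : ℝ → ℝ := fun t => ‖p t - q t‖ with hfdef
  have hf : ContinuousOn f (Icc 0 T) :=
    ((hdiff.continuous.sub hq.continuous).norm).continuousOn
  have hf' : ∀ x ∈ Ico (0:ℝ) T, ∀ r : ℝ, (fun _ => (0:ℝ)) x < r →
      ∃ᶠ z in 𝓝[>] x, (z - x)⁻¹ * (f z - f x) < r := by
    intro x hx r hr
    have hr' : (0:ℝ) < r := hr
    have hx0 : (0:ℝ) ≤ x := hx.1
    have hbx : 0 < ‖p x - q x‖ := hpos x hx0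
    set w : ℝ → EuclideanSpace ℝ (Fin n) := fun z => p z - q x with hwdef
    have hw : HasDerivAt w (deriv p x) x := ((hdiff x).hasDerivAt).sub_const _
    have hwx : w x = p x - q x := rfl
    have hwx0 : ⟪w x, w x⟫ ≠ 0 := by
      rw [real_inner_self_eq_norm_mul_norm, hwx]; positivity
    have hG : HasDerivAt (fun z => Real.sqrt ⟪w z, w z⟫)
        ((⟪w x, deriv p x⟫ + ⟪deriv p x, w x⟫) / (2 * Real.sqrt ⟪w x, w x⟫)) x :=
      (HasDerivAt.inner ℝ hw hw).sqrt hwx0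
    have hsqrt : ∀ z, Real.sqrt ⟪w z, w z⟫ = ‖w z‖ := fun z => by
      rw [real_inner_self_eq_norm_mul_norm, Real.sqrt_mul_self (norm_nonneg _)]
    set D : ℝ := (⟪w x, deriv p x⟫ + ⟪deriv p x, w x⟫) / (2 * Real.sqrt ⟪w x, w x⟫)
      with hDdef
    have hG' : HasDerivAt (fun z => ‖w z‖) D x := by
      simpa only [hsqrt] using hG
    have ha0 : 0 < ‖qa x - p x‖ := by
      rw [norm_pos_iff, sub_ne_zero]
      exact fun hh => hne x hx0 hh.symm
    have hinner : ‖qa x - p x‖ * ‖q x - p x‖ * k ≤ ⟪qa x - p x, q x - p x⟫ := by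
      apply tracking_inner_key _ _ lam k hk0.le hk2
      have h4 : qa x - p x - (q x - p x) = qa x - q x := by abel
      rw [h4]
      calc ‖qa x - q x‖ ≤ ‖p x - q x‖ / lam := herr x hx0
        _ = ‖q x - p x‖ / lam := by rw [norm_sub_rev]
    have hip : ⟪deriv p x, w x⟫ ≤ -‖p x - q x‖ := by
      rw [hderiv x hx0]
      have hwqx : w x = -(q x - p x) := by rw [hwx]; abel
      rw [hwqx, inner_neg_right, real_inner_smul_left]
      have hq_eq : ‖q x - p x‖ = ‖p x - q x‖ := norm_sub_rev _ _
      rw [hq_eq] at hinner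
      have h2 : s / ‖qa x - p x‖ * (‖qa x - p x‖ * ‖p x - q x‖ * k)
          ≤ s / ‖qa x - p x‖ * ⟪qa x - p x, q x - p x⟫ :=
        mul_le_mul_of_nonneg_left hinner (by positivity)
      have h3 : s / ‖qa x - p x‖ * (‖qa x - p x‖ * ‖p x - q x‖ * k)
          = s * k * ‖p x - q x‖ := by
        field_simp
      rw [h3, hsk, one_mul] at h2
      linarith
    have hip' : ⟪p x - q x, deriv p x⟫ ≤ -‖p x - q x‖ := by
      rw [real_inner_comm]; exact hip
    have hD : D ≤ -1 := by
      rw [hDdef, hsqrt, real_inner_comm (w x) (deriv p x), hwx]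
      rw [div_le_iff₀ (by positivity)]
      linarith
    have hslope : Tendsto (slope (fun z => ‖w z‖) x) (𝓝[>] x) (𝓝 D) :=
      (hasDerivAt_iff_tendsto_slope.1 hG').mono_left
        (nhdsWithin_mono x fun z hz => ne_of_gt hz)
    have hev : ∀ᶠ z in 𝓝[>] x, slope (fun z => ‖w z‖) x z < r - 1 :=
      hslope.eventually_lt_const (by linarith [hr'])
    have hfin : ∀ᶠ z in 𝓝[>] x, (z - x)⁻¹ * (f z - f x) < r := by
      filter_upwards [hev, self_mem_nhdsWithin] with z hz hz'
      have hzx : x < z := hz'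
      have hzx0 : 0 < z - x := by linarith
      have hfz : f z - f x ≤ (‖w z‖ - ‖w x‖) + (z - x) := by
        have t1 : f z ≤ ‖w z‖ + ‖q x - q z‖ := by
          have : p z - q z = (p z - q x) + (q x - q z) := by abel
          rw [hfdef]; dsimp only
          rw [this]
          exact norm_add_le _ _
        have t2 : ‖q x - q z‖ ≤ z - x := by
          have := hq.dist_le_mul x z
          rw [NNReal.coe_one, one_mul] at this
          rw [← dist_eq_norm]
          calc dist (q x) (q z) ≤ dist x z := this
            _ = z - x := by rw [Real.dist_eq, abs_of_neg (by linarith : x - z < 0)]; ring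
        have t3 : f x = ‖w x‖ := rfl
        linarith
      have hsl : slope (fun z => ‖w z‖) x z = (‖w z‖ - ‖w x‖) / (z - x) := by
        rw [slope_def_field]
      rw [hsl] at hz
      rw [div_lt_iff₀ hzx0] at hz
      calc (z - x)⁻¹ * (f z - f x) ≤ (z - x)⁻¹ * ((‖w z‖ - ‖w x‖) + (z - x)) := by
            apply mul_le_mul_of_nonneg_left hfz (by positivity)
        _ < r := by
            rw [inv_mul_lt_iff₀ hzx0]
            nlinarith
    exact hfin.frequently
  have hfin := le_gronwallBound_of_liminf_deriv_right_le (f' := fun _ => (0:ℝ))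
    (δ := f 0) (K := 0) (ε := 0) hf hf' le_rfl (fun x _ => by norm_num) T ⟨hT, le_rfl⟩
  simpa [gronwallBound] using hfin
end

section
/- For all real numbers λ ≥ 2, 1 ≤ s ≤ √(1/(1 − 1/λ²)), and 0 < α ≤ 0.68: α²·(1 + 1/(2λ²)) + 4·α·s + 4·s² − 9 ≤ 0. -/
/-- **Feasibility of the α-Invariant against a faster tracker.** For `λ ≥ 2`,
tracker speed `1 ≤ s ≤ √(1/(1 − 1/λ²))`, and `0 < α ≤ 0.68`,
`α²(1 + 1/(2λ²)) + 4αs + 4s² − 9 ≤ 0`. -/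
theorem alpha_invariant_feasible_speedup
    (lam s α : ℝ) (hlam : 2 ≤ lam) (hs1 : 1 ≤ s)
    (hs2 : s ≤ Real.sqrt (1 / (1 - 1 / lam ^ 2)))
    (hα0 : 0 < α) (hα : α ≤ 0.68) :
    α ^ 2 * (1 + 1 / (2 * lam ^ 2)) + 4 * α * s + 4 * s ^ 2 - 9 ≤ 0 := by
  have hlam2 : (4:ℝ) ≤ lam ^ 2 := by nlinarith
  have hlam2' : (0:ℝ) < lam ^ 2 := by positivity
  have ht : 1 / lam ^ 2 ≤ 1 / 4 := by
    apply one_div_le_one_div_of_le <;> linarith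
  have htpos : 0 < 1 / lam ^ 2 := by positivity
  have hden : (3/4 : ℝ) ≤ 1 - 1 / lam ^ 2 := by linarith
  have hdenpos : (0:ℝ) < 1 - 1 / lam ^ 2 := by linarith
  have hX : 1 / (1 - 1 / lam ^ 2) ≤ 4 / 3 := by
    rw [div_le_div_iff₀ hdenpos (by norm_num)]; linarith
  have hXnn : 0 ≤ 1 / (1 - 1 / lam ^ 2) := by positivity
  have hss : s ^ 2 ≤ 1 / (1 - 1 / lam ^ 2) := by
    have h := Real.sq_sqrt hXnn
    nlinarith [hs2, hs1]
  have hs43 : s ^ 2 ≤ 4/3 := le_trans hss hX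
  have hsb : s ≤ 1.1548 := by nlinarith
  have h18 : 1 / (2 * lam ^ 2) ≤ 1 / 8 := by
    have h : 1 / (2 * lam ^ 2) = (1 / lam ^ 2) / 2 := by ring
    linarith [ht, h.le, h.ge]
  have hterm : α ^ 2 * (1 + 1 / (2 * lam ^ 2)) ≤ α ^ 2 * (9 / 8) := by
    apply mul_le_mul_of_nonneg_left _ (sq_nonneg α); linarith
  nlinarith [mul_nonneg (sub_nonneg.2 hα) (sub_nonneg.2 hsb),
    mul_nonneg (sub_nonneg.2 hα) hα0.le, hs43, hterm]
end

section
/- For all real numbers d > 0, λ ≥ 1, 0 < α ≤ 1, and s ≥ 1/2: √((√(4d² − α²d²/λ²) − (2s − 1)·d)² + α²d²/λ²) ≥ d·√((2s − 3)² + α²·(s − 1/2)/λ²). -/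
/-- **Phase distance growth against a tracker with speed `s`.** The distance between
the target's destination and the best tracker position after it moves distance `2sd`
along the central axis is at least `d·√((2s − 3)² + α²(s − 1/2)/λ²)`. -/
theorem phase_distance_growth_speedup
    (d lam α s : ℝ) (hd : 0 < d) (hlam : 1 ≤ lam)
    (hα0 : 0 < α) (hα1 : α ≤ 1) (hs : 1 / 2 ≤ s) :
    d * Real.sqrt ((2 * s - 3) ^ 2 + α ^ 2 * (s - 1 / 2) / lam ^ 2) ≤
      Real.sqrt ((Real.sqrt (4 * d ^ 2 - α ^ 2 * d ^ 2 / lam ^ 2)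
        - (2 * s - 1) * d) ^ 2 + α ^ 2 * d ^ 2 / lam ^ 2) := by
  have hlam0 : (0:ℝ) < lam := lt_of_lt_of_le one_pos hlam
  set t : ℝ := α ^ 2 / lam ^ 2 with ht
  have ht0 : 0 < t := div_pos (pow_pos hα0 2) (pow_pos hlam0 2)
  have ht1 : t ≤ 1 := by
    rw [ht, div_le_one (pow_pos hlam0 2)]
    nlinarith
  set u : ℝ := Real.sqrt (4 - t) with hu
  have hu0 : 0 ≤ u := Real.sqrt_nonneg _
  have hu2 : u ^ 2 = 4 - t := Real.sq_sqrt (by linarith)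
  have hule : u ≤ 2 := by
    nlinarith [hu2, hu0]
  -- factor d out of the inner sqrt
  have hfac : Real.sqrt (4 * d ^ 2 - α ^ 2 * d ^ 2 / lam ^ 2) = d * u := by
    rw [hu, show 4 * d ^ 2 - α ^ 2 * d ^ 2 / lam ^ 2 = d ^ 2 * (4 - t) by
      rw [ht]; ring, Real.sqrt_mul (sq_nonneg d), Real.sqrt_sq hd.le]
  rw [hfac]
  have key : (2 * s - 3) ^ 2 + t * (s - 1 / 2) ≤ (u - (2 * s - 1)) ^ 2 + t := by
    nlinarith [hu2, mul_nonneg (sub_nonneg.2 hule) (by linarith : (0:ℝ) ≤ s - 1/2)]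
  calc d * Real.sqrt ((2 * s - 3) ^ 2 + α ^ 2 * (s - 1 / 2) / lam ^ 2)
      = Real.sqrt (d ^ 2 * ((2 * s - 3) ^ 2 + t * (s - 1 / 2))) := by
        rw [Real.sqrt_mul (sq_nonneg d), Real.sqrt_sq hd.le, ht]
        ring_nf
    _ ≤ Real.sqrt (d ^ 2 * ((u - (2 * s - 1)) ^ 2 + t)) := by
        apply Real.sqrt_le_sqrt
        exact mul_le_mul_of_nonneg_left key (sq_nonneg d)
    _ = Real.sqrt ((d * u - (2 * s - 1) * d) ^ 2 + α ^ 2 * d ^ 2 / lam ^ 2) := by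
        congr 1
        rw [ht]; ring
end

section
/- Let λ ≥ 1 be a real number and let d, t : ℕ → ℝ and x : ℕ → ℝ satisfy t 0 = 0 and, for every i: d i > 0, |x i| ≤ 1/λ, t (i+1) = t i + (1 + x i)·(d i), and d (i+1) ≤ d i + (d i)/λ + (x i)·(d i). Then for every n: d n ≤ d 0 + (2/(λ + 1))·(t n). -/
/-- **O(t/λ) upper bound for Phased-Greedy among obstacles.** If phase `i` starts at
time `t i` with geodesic distance `d i > 0`, lasts `(1 + x i)·(d i)` time units with
`|x i| ≤ 1/λ`, and the distance increases by at most `(d i)/λ + (x i)·(d i)`, then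
`d n ≤ d 0 + 2/(λ + 1)·(t n)` for every `n`. -/
theorem phased_greedy_upper_bound
    (lam : ℝ) (hlam : 1 ≤ lam) (d t x : ℕ → ℝ)
    (ht0 : t 0 = 0)
    (hd_pos : ∀ i, 0 < d i)
    (hx : ∀ i, |x i| ≤ 1 / lam)
    (ht : ∀ i, t (i + 1) = t i + (1 + x i) * d i)
    (hd : ∀ i, d (i + 1) ≤ d i + d i / lam + x i * d i) :
    ∀ n, d n ≤ d 0 + 2 / (lam + 1) * t n := by
  have hlam0 : (0:ℝ) < lam := lt_of_lt_of_le one_pos hlam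
  have hlam1 : (0:ℝ) < lam + 1 := by linarith
  intro n
  induction n with
  | zero => simp [ht0]
  | succ n ih =>
    have hxn := abs_le.mp (hx n)
    have hdn := hd_pos n
    -- key step: d n / lam + x n * d n ≤ 2/(lam+1) * ((1 + x n) * d n)
    have key : d n / lam + x n * d n ≤ 2 / (lam + 1) * ((1 + x n) * d n) := by
      rw [div_add' _ _ _ (ne_of_gt hlam0), div_le_iff₀ hlam0, div_mul_eq_mul_div,
        div_mul_eq_mul_div, le_div_iff₀ hlam1]
      have h1 : x n * (lam - 1) ≤ (lam - 1) / lam := by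
        have : x n * (lam - 1) ≤ (1/lam) * (lam - 1) :=
          mul_le_mul_of_nonneg_right hxn.2 (by linarith)
        calc x n * (lam - 1) ≤ (1/lam) * (lam - 1) := this
          _ = (lam - 1) / lam := by ring
      have h2 : (lam - 1) / lam ≤ lam - 1 := by
        rw [div_le_iff₀ hlam0]
        nlinarith
      have h3 : x n * lam ≤ 1 := by
        have := mul_le_mul_of_nonneg_right hxn.2 hlam0.le
        rwa [one_div, inv_mul_cancel₀ (ne_of_gt hlam0)] at this
      nlinarith [mul_nonneg (mul_nonneg hdn.le (by linarith : (0:ℝ) ≤ lam - 1))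
        (by linarith : (0:ℝ) ≤ 1 - x n * lam)]
    calc d (n+1) ≤ d n + d n / lam + x n * d n := hd n
      _ ≤ d 0 + 2 / (lam + 1) * t n + 2 / (lam + 1) * ((1 + x n) * d n) := by linarith
      _ = d 0 + 2 / (lam + 1) * t (n+1) := by rw [ht n]; ring
end

section
/- For all real numbers d > 0, Δ ≥ 0, s ≥ 1, and any angle γ ∈ ℝ: √((s·Δ·sin γ)² + (d + Δ − s·Δ·cos γ)²) ≤ d + s²Δ²/(2d) − Δ²/(2d) + Δ·(1 + Δ/d)·(1 − s·cos γ). -/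
/-- **Per-step distance bound for a tracker with speed `s ≥ 1`.** If the current
distance is `d`, the tracker moves distance `s·Δ` toward the observed location while
the target moves distance `Δ` directly away, with `γ` the angle at the tracker
between the true and observed target locations, then the new distance is at most
`d + s²Δ²/(2d) − Δ²/(2d) + Δ(1 + Δ/d)(1 − s·cos γ)`. -/
theorem speedup_step_distance_bound
    (d Δ s γ : ℝ) (hd : 0 < d) (hΔ : 0 ≤ Δ) (hs : 1 ≤ s) :
    Real.sqrt ((s * Δ * Real.sin γ) ^ 2 + (d + Δ - s * Δ * Real.cos γ) ^ 2)
      ≤ d + s ^ 2 * Δ ^ 2 / (2 * d) - Δ ^ 2 / (2 * d)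
        + Δ * (1 + Δ / d) * (1 - s * Real.cos γ) := by
  set E := (s * Δ * Real.sin γ) ^ 2 + (d + Δ - s * Δ * Real.cos γ) ^ 2 with hE
  have hE0 : 0 ≤ E := by positivity
  set x := Real.sqrt E with hx
  have hx0 : 0 ≤ x := Real.sqrt_nonneg E
  have hx2 : x ^ 2 = E := Real.sq_sqrt hE0
  have hsin : Real.sin γ ^ 2 = 1 - Real.cos γ ^ 2 := by
    have := Real.sin_sq_add_cos_sq γ; linarith
  have hRHS : d + s ^ 2 * Δ ^ 2 / (2 * d) - Δ ^ 2 / (2 * d)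
        + Δ * (1 + Δ / d) * (1 - s * Real.cos γ) = (E + d ^ 2) / (2 * d) := by
    rw [hE, mul_pow, mul_pow, hsin]
    field_simp
    ring
  rw [hRHS, le_div_iff₀ (by positivity)]
  nlinarith [sq_nonneg (x - d)]
end
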